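/- The principles C_s and D_u are incompatible: it is not the case that both C_s and D_u hold. -/

import Mathlib

noncomputable section

/-- The first uncountable ordinal. -/
def omega1 : Ordinal := (Cardinal.aleph 1).ord

/-- `C ⊆ ω₁` is club: unbounded in `ω₁` and closed (every limit `α < ω₁` with
`sup (C ∩ α) = α` belongs to `C`). -/
def IsClub' (C : Set Ordinal) : Prop :=
  C ⊆ Set.Iio omega1 ∧
  (∀ α < omega1, ∃ β ∈ C, α < β) ∧
  (∀ α < omega1, Order.IsSuccLimit α → sSup (C ∩ Set.Iio α) = α → α ∈ C)

/-- `S ⊆ ω₁` is stationary: it meets every club subset of `ω₁`. -/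
def IsStat (S : Set Ordinal) : Prop :=
  S ⊆ Set.Iio omega1 ∧ ∀ C, IsClub' C → (S ∩ C).Nonempty

/-- A run of the stationary set splitting game `SG`, coded by a pair of
disjoint subsets `A, B` of `ω₁` (the accepted set is `E = A ∪ B`). -/
def SGRun (A B : Set Ordinal) : Prop :=
  A ⊆ Set.Iio omega1 ∧ B ⊆ Set.Iio omega1 ∧ Disjoint A B

/-- Split wins the run `(A, B)` if `A ∪ B` is nonstationary or both `A` and `B`
are stationary. -/
def SplitWins (A B : Set Ordinal) : Prop :=
  ¬ IsStat (A ∪ B) ∨ (IsStat A ∧ IsStat B)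

/-- The run `(A, B)` is played according to Split's strategy `τ`
(`true` = put into `A`): for every accepted `α`, `α ∈ A` iff `τ` says so on the
position `(A ∩ α, B ∩ α)`. -/
def PlayedBySplit (τ : Ordinal → Set Ordinal → Set Ordinal → Bool)
    (A B : Set Ordinal) : Prop :=
  ∀ α ∈ A ∪ B, (α ∈ A ↔ τ α (A ∩ Set.Iio α) (B ∩ Set.Iio α) = true)

/-- `τ` is a winning strategy for Split. -/
def SplitWinning (τ : Ordinal → Set Ordinal → Set Ordinal → Bool) : Prop :=
  ∀ A B, SGRun A B → PlayedBySplit τ A B → SplitWins A B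

/-- The run `(A, B)` is played according to Unsplit's strategy `υ`
(`true` = accept): for every `α < ω₁`, `α` is accepted iff `υ` says so on the
position `(A ∩ α, B ∩ α)`. -/
def PlayedByUnsplit (υ : Ordinal → Set Ordinal → Set Ordinal → Bool)
    (A B : Set Ordinal) : Prop :=
  ∀ α < omega1, (α ∈ A ∪ B ↔ υ α (A ∩ Set.Iio α) (B ∩ Set.Iio α) = true)

/-- `υ` is a winning strategy for Unsplit. -/
def UnsplitWinning (υ : Ordinal → Set Ordinal → Set Ordinal → Bool) : Prop :=
  ∀ A B, SGRun A B → PlayedByUnsplit υ A B → ¬ SplitWins A B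

/-- A set of ordinals has order type `ω`. -/
def OTypeOmega (s : Set Ordinal) : Prop :=
  Ordinal.type ((· < ·) : s → s → Prop) = Ordinal.omega0

/-- The family `⟨a α β : β < γ α⟩` (for `α < ω₁` limit) witnesses `C_s`:
each `a α β` is a cofinal subset of `α` of order type `ω`; the family is
`⊆`-decreasing mod finite in `β`; and for every club `C` and stationary `E`
some `a α β` with `α ∈ E` has `a α β \ C` finite and `a α β ∩ E` infinite. -/
def CsWitness (γ : Ordinal → Ordinal) (a : Ordinal → Ordinal → Set Ordinal) : Prop :=
  (∀ α, α < omega1 → Order.IsSuccLimit α →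
    γ α < omega1 ∧
    ∀ β < γ α, a α β ⊆ Set.Iio α ∧ (∀ ξ < α, ∃ η ∈ a α β, ξ < η) ∧ OTypeOmega (a α β)) ∧
  (∀ α, α < omega1 → Order.IsSuccLimit α → ∀ β β', β < β' → β' < γ α → (a α β' \ a α β).Finite) ∧
  (∀ C E : Set Ordinal, IsClub' C → IsStat E →
    ∃ α β, α < omega1 ∧ Order.IsSuccLimit α ∧ α ∈ E ∧ β < γ α ∧
      (a α β \ C).Finite ∧ (a α β ∩ E).Infinite)

/-- The principle `C_s`. -/
def Cs : Prop :=
  ∃ (γ : Ordinal.{0} → Ordinal.{0}) (a : Ordinal.{0} → Ordinal.{0} → Set Ordinal.{0}), CsWitness γ a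

/-- The sequence `⟨σ α : α < ω₁⟩` witnesses `D_u`: it is a `◊`-sequence, and
for every `E ⊆ ω₁` there is a club `C` such that either every `α ∈ C` guessing
`E` lies in `E`, or every `α ∈ C` guessing `E` lies outside `E`. -/
def DuWitness (σ : Ordinal → Set Ordinal) : Prop :=
  (∀ α < omega1, σ α ⊆ Set.Iio α) ∧
  (∀ A : Set Ordinal, A ⊆ Set.Iio omega1 →
    IsStat {α | α < omega1 ∧ A ∩ Set.Iio α = σ α}) ∧
  (∀ E : Set Ordinal, E ⊆ Set.Iio omega1 →
    ∃ C, IsClub' C ∧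
      ((∀ α ∈ C, E ∩ Set.Iio α = σ α → α ∈ E) ∨
       (∀ α ∈ C, E ∩ Set.Iio α = σ α → α ∉ E)))

/-- The principle `D_u`. -/
def Du : Prop := ∃ σ : Ordinal.{0} → Set Ordinal.{0}, DuWitness σ


section CsDuAux

private lemma iSup_lt_omega1 (c : ℕ → Ordinal) (h : ∀ n, c n < omega1) :
    (⨆ n, c n) < omega1 := by
  apply Ordinal.iSup_lt_ord_lift _ h
  rw [show omega1.cof = Cardinal.aleph 1 from Cardinal.isRegular_aleph_one.cof_eq]
  simpa using Cardinal.aleph0_lt_aleph_one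

private lemma club_sup_mem {C : Set Ordinal} (hC : IsClub' C) (c : ℕ → Ordinal)
    (hmono : StrictMono c) (hlt : ∀ n, c n < omega1)
    (hcof : ∀ n, ∃ m, c n ≤ c m ∧ c m ∈ C) : (⨆ n, c n) ∈ C := by
  set s := ⨆ n, c n with hs
  have hbddr : BddAbove (Set.range c) := Ordinal.bddAbove_range _
  have hsω : s < omega1 := iSup_lt_omega1 c hlt
  have hcs : ∀ n, c n < s := fun n =>
    lt_of_lt_of_le (hmono (Nat.lt_succ_self n)) (le_ciSup hbddr (n + 1))
  have hslim : Order.IsSuccLimit s := by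
    rw [Ordinal.isSuccLimit_iff]
    constructor
    · intro h0
      exact absurd ((hcs 0).trans_eq h0) (fun h => not_lt_zero h)
    · refine Order.isSuccPrelimit_of_succ_lt (fun t ht => ?_)
      obtain ⟨n, hn⟩ := (Ordinal.lt_iSup_iff).1 ht
      exact lt_of_le_of_lt (Order.succ_le_of_lt hn) (hcs n)
  apply hC.2.2 s hsω hslim
  have hbdd : BddAbove (C ∩ Set.Iio s) := ⟨s, fun x hx => le_of_lt hx.2⟩
  have hne : (C ∩ Set.Iio s).Nonempty := by
    obtain ⟨m, _, hmC⟩ := hcof 0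
    exact ⟨c m, hmC, hcs m⟩
  apply le_antisymm
  · exact csSup_le hne (fun x hx => le_of_lt hx.2)
  · rw [hs]
    refine ciSup_le (fun n => ?_)
    obtain ⟨m, hnm, hmC⟩ := hcof n
    exact hnm.trans (le_csSup hbdd ⟨hmC, hcs m⟩)

private lemma isClub_inter {C D : Set Ordinal} (hC : IsClub' C) (hD : IsClub' D) :
    IsClub' (C ∩ D) := by
  refine ⟨fun x hx => hC.1 hx.1, ?_, ?_⟩
  · intro α hα
    have FC : ∀ x : {x : Ordinal // x < omega1},
        {y : {x : Ordinal // x < omega1} // x.1 < y.1 ∧ y.1 ∈ C} := by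
      intro x
      have := hC.2.1 x.1 x.2
      exact ⟨⟨this.choose, hC.1 this.choose_spec.1⟩, this.choose_spec.2, this.choose_spec.1⟩
    have FD : ∀ x : {x : Ordinal // x < omega1},
        {y : {x : Ordinal // x < omega1} // x.1 < y.1 ∧ y.1 ∈ D} := by
      intro x
      have := hD.2.1 x.1 x.2
      exact ⟨⟨this.choose, hD.1 this.choose_spec.1⟩, this.choose_spec.2, this.choose_spec.1⟩
    let c : ℕ → {x : Ordinal // x < omega1} := fun n =>
      Nat.rec (FC ⟨α, hα⟩).1 (fun n p => if Even n then (FD p).1 else (FC p).1) n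
    have hstep : ∀ n, (c n).1 < (c (n+1)).1 := by
      intro n
      show (c n).1 < (if Even n then (FD (c n)).1 else (FC (c n)).1).1
      by_cases h : Even n
      · rw [if_pos h]; exact (FD (c n)).2.1
      · rw [if_neg h]; exact (FC (c n)).2.1
    have hmono : StrictMono (fun n => (c n).1) := strictMono_nat_of_lt_succ hstep
    have hCmem : ∀ n, (c (2*n)).1 ∈ C := by
      intro n
      cases n with
      | zero => exact (FC ⟨α, hα⟩).2.2
      | succ k =>
        show (if Even (2*k+1) then (FD (c (2*k+1))).1 else (FC (c (2*k+1))).1).1 ∈ C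
        rw [if_neg (by simp [Nat.even_add_one, parity_simps])]
        exact (FC _).2.2
    have hDmem : ∀ n, (c (2*n+1)).1 ∈ D := by
      intro n
      show (if Even (2*n) then (FD (c (2*n))).1 else (FC (c (2*n))).1).1 ∈ D
      rw [if_pos (by simp)]
      exact (FD _).2.2
    refine ⟨⨆ n, (c n).1, ⟨?_, ?_⟩, ?_⟩
    · exact club_sup_mem hC _ hmono (fun n => (c n).2)
        (fun n => ⟨2*n, hmono.monotone (show n ≤ 2*n by omega), hCmem n⟩)
    · exact club_sup_mem hD _ hmono (fun n => (c n).2)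
        (fun n => ⟨2*n+1, hmono.monotone (show n ≤ 2*n+1 by omega), hDmem n⟩)
    · calc α < (c 0).1 := (FC ⟨α, hα⟩).2.1
        _ ≤ ⨆ n, (c n).1 := le_ciSup (Ordinal.bddAbove_range _) 0
  · intro α hα hlim hsup
    have hne : ((C ∩ D) ∩ Set.Iio α).Nonempty := by
      by_contra h
      rw [Set.not_nonempty_iff_eq_empty] at h
      rw [h] at hsup
      simp at hsup
      exact hlim.ne_bot hsup.symm
    have hkey : ∀ (S : Set Ordinal), (C ∩ D) ⊆ S → sSup (S ∩ Set.Iio α) = α := by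
      intro S hS
      apply le_antisymm
      · exact csSup_le ⟨hne.choose, hS hne.choose_spec.1, hne.choose_spec.2⟩
          (fun x hx => le_of_lt hx.2)
      · calc α = sSup ((C ∩ D) ∩ Set.Iio α) := hsup.symm
          _ ≤ sSup (S ∩ Set.Iio α) := csSup_le_csSup ⟨α, fun x hx => le_of_lt hx.2⟩
              ⟨hne.choose, hne.choose_spec⟩ (fun x hx => ⟨hS hx.1, hx.2⟩)
    exact ⟨hC.2.2 α hα hlim (hkey C (fun x hx => hx.1)),
           hD.2.2 α hα hlim (hkey D (fun x hx => hx.2))⟩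

private lemma isStat_inter_club {E C : Set Ordinal} (hE : IsStat E) (hC : IsClub' C) :
    IsStat (E ∩ C) := by
  refine ⟨fun x hx => hE.1 hx.1, fun D hD => ?_⟩
  obtain ⟨x, hxE, hxCD⟩ := hE.2 _ (isClub_inter hC hD)
  exact ⟨x, ⟨hxE, hxCD.1⟩, hxCD.2⟩

open Classical in
private noncomputable def runF (σ : Ordinal → Set Ordinal)
    (Φ : Ordinal → Set Ordinal → Set Ordinal → Prop) : Ordinal → Bool × Bool :=
  WellFounded.fix wellFounded_lt
    (fun α ih =>
      if α < omega1 ∧ {β | ∃ h : β < α, (ih β h).1 = true} = σ α then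
        (if Φ α {β | ∃ h : β < α, (ih β h).1 = true} {β | ∃ h : β < α, (ih β h).2 = true}
         then (true, false) else (false, true))
      else (false, false))

open Classical in
private lemma runF_eq (σ : Ordinal → Set Ordinal)
    (Φ : Ordinal → Set Ordinal → Set Ordinal → Prop) (α : Ordinal) :
    runF σ Φ α =
      if α < omega1 ∧ {β | ∃ _ : β < α, (runF σ Φ β).1 = true} = σ α then
        (if Φ α {β | ∃ _ : β < α, (runF σ Φ β).1 = true}
            {β | ∃ _ : β < α, (runF σ Φ β).2 = true}
         then (true, false) else (false, true))
      else (false, false) := by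
  rw [runF]
  exact WellFounded.fix_eq _ _ _

end CsDuAux

/-- The principles `C_s` and `D_u` are incompatible. -/
theorem cs_du_incompatible : ¬ (Cs ∧ Du) := by
  rintro ⟨⟨γ, a, hcs⟩, ⟨σ, hσ⟩⟩
  classical
  set Φ : Ordinal → Set Ordinal → Set Ordinal → Prop :=
    fun α X Y => ∃ β, β < γ α ∧ (a α β ∩ Y).Infinite ∧ (a α β ∩ X).Finite with hΦdef
  set A : Set Ordinal := {α | (runF σ Φ α).1 = true} with hAdef
  set B : Set Ordinal := {α | (runF σ Φ α).2 = true} with hBdef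
  have hXA : ∀ α : Ordinal, {β | ∃ _ : β < α, (runF σ Φ β).1 = true} = A ∩ Set.Iio α := by
    intro α; ext β
    simp only [Set.mem_setOf_eq, exists_prop, Set.mem_inter_iff, Set.mem_Iio, hAdef]
    tauto
  have hXB : ∀ α : Ordinal, {β | ∃ _ : β < α, (runF σ Φ β).2 = true} = B ∩ Set.Iio α := by
    intro α; ext β
    simp only [Set.mem_setOf_eq, exists_prop, Set.mem_inter_iff, Set.mem_Iio, hBdef]
    tauto
  have hchar : ∀ α, runF σ Φ α =
      if α < omega1 ∧ A ∩ Set.Iio α = σ α then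
        (if Φ α (A ∩ Set.Iio α) (B ∩ Set.Iio α) then (true, false) else (false, true))
      else (false, false) := by
    intro α; rw [runF_eq, hXA, hXB]
  have hdisj : ∀ α, ¬(α ∈ A ∧ α ∈ B) := by
    rintro α ⟨h1, h2⟩
    simp only [hAdef, hBdef, Set.mem_setOf_eq] at h1 h2
    rw [hchar α] at h1 h2
    split_ifs at h1 h2
  have hEmem : ∀ α, (α ∈ A ∨ α ∈ B) ↔ (α < omega1 ∧ A ∩ Set.Iio α = σ α) := by
    intro α
    have h := hchar α
    by_cases h1 : α < omega1 ∧ A ∩ Set.Iio α = σ α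
    · refine ⟨fun _ => h1, fun _ => ?_⟩
      rw [if_pos h1] at h
      by_cases h2 : Φ α (A ∩ Set.Iio α) (B ∩ Set.Iio α)
      · rw [if_pos h2] at h
        exact Or.inl (show (runF σ Φ α).1 = true by rw [h])
      · rw [if_neg h2] at h
        exact Or.inr (show (runF σ Φ α).2 = true by rw [h])
    · rw [if_neg h1] at h
      refine ⟨fun hm => ?_, fun hm => absurd hm h1⟩
      rcases hm with hm | hm
      · have h' : (runF σ Φ α).1 = true := hm
        rw [h] at h'
        exact absurd h' (by simp)
      · have h' : (runF σ Φ α).2 = true := hm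
        rw [h] at h'
        exact absurd h' (by simp)
  have hAiff : ∀ α, α < omega1 → A ∩ Set.Iio α = σ α →
      (α ∈ A ↔ Φ α (A ∩ Set.Iio α) (B ∩ Set.Iio α)) := by
    intro α h1 h2
    simp only [hAdef, Set.mem_setOf_eq]
    rw [hchar α, if_pos ⟨h1, h2⟩]
    split_ifs with h3 <;> simpa [hAdef] using h3
  set E : Set Ordinal := {α | α < omega1 ∧ A ∩ Set.Iio α = σ α} with hEdef
  have hAsub : A ⊆ Set.Iio omega1 := fun α hα => ((hEmem α).1 (Or.inl hα)).1
  have hstatE : IsStat E := hσ.2.1 A hAsub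
  obtain ⟨C, hC, hdich⟩ := hσ.2.2 A hAsub
  have hstatEC : IsStat (E ∩ C) := isStat_inter_club hstatE hC
  obtain ⟨α, β, hα1, hlim, hαEC, hβ, hfin, hinf⟩ := hcs.2.2 C (E ∩ C) hC hstatEC
  have hsubα : ∀ β', β' < γ α → a α β' ⊆ Set.Iio α :=
    fun β' h => ((hcs.1 α hα1 hlim).2 β' h).1
  have hcoh := hcs.2.1 α hα1 hlim
  have hαE : α ∈ E := hαEC.1
  have hαC : α ∈ C := hαEC.2
  have hguess : A ∩ Set.Iio α = σ α := hαE.2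
  have hrestr : ∀ β', β' < γ α → ∀ S : Set Ordinal,
      a α β' ∩ (S ∩ Set.Iio α) = a α β' ∩ S := by
    intro β' hβ' S
    ext x
    exact ⟨fun hx => ⟨hx.1, hx.2.1⟩, fun hx => ⟨hx.1, hx.2, hsubα β' hβ' hx.1⟩⟩
  rcases hdich with hpos | hneg
  · have hECA : E ∩ C ⊆ A := fun x hx => hpos x hx.2 hx.1.2
    have hBC : ∀ x, x ∈ B → x ∉ C := by
      intro x hxB hxC
      have hxE : x < omega1 ∧ A ∩ Set.Iio x = σ x := (hEmem x).1 (Or.inr hxB)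
      exact hdisj x ⟨hpos x hxC hxE.2, hxB⟩
    have hainfA : (a α β ∩ A).Infinite :=
      hinf.mono (fun x hx => ⟨hx.1, hECA hx.2⟩)
    have hafinB : (a α β ∩ B).Finite :=
      hfin.subset (fun x hx => ⟨hx.1, hBC x hx.2⟩)
    have hΦfalse : ¬ Φ α (A ∩ Set.Iio α) (B ∩ Set.Iio α) := by
      rintro ⟨β', hβ', hinfB', hfinA'⟩
      rw [hrestr β' hβ' B] at hinfB'
      rw [hrestr β' hβ' A] at hfinA'
      rcases lt_trichotomy β β' with hlt | heq | hlt
      · exact hinfB' (((hcoh β β' hlt hβ').union hafinB).subset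
          (fun x hx => if h : x ∈ a α β then Or.inr ⟨h, hx.2⟩ else Or.inl ⟨hx.1, h⟩))
      · subst heq; exact hinfB' hafinB
      · exact hainfA (((hcoh β' β hlt hβ).union hfinA').subset
          (fun x hx => if h : x ∈ a α β' then Or.inr ⟨h, hx.2⟩ else Or.inl ⟨hx.1, h⟩))
    exact hΦfalse ((hAiff α hαE.1 hguess).1 (hECA hαEC))
  · have hAC : ∀ x, x ∈ A → x ∉ C := by
      intro x hxA hxC
      have hxE : x < omega1 ∧ A ∩ Set.Iio x = σ x := (hEmem x).1 (Or.inl hxA)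
      exact hneg x hxC hxE.2 hxA
    have hECB : E ∩ C ⊆ B := by
      intro x hx
      rcases (hEmem x).2 ⟨hx.1.1, hx.1.2⟩ with h | h
      · exact absurd hx.2 (hAC x h)
      · exact h
    have hainfB : (a α β ∩ B).Infinite :=
      hinf.mono (fun x hx => ⟨hx.1, hECB hx.2⟩)
    have hafinA : (a α β ∩ A).Finite :=
      hfin.subset (fun x hx => ⟨hx.1, hAC x hx.2⟩)
    have hΦtrue : Φ α (A ∩ Set.Iio α) (B ∩ Set.Iio α) := by
      refine ⟨β, hβ, ?_, ?_⟩
      · rw [hrestr β hβ B]; exact hainfB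
      · rw [hrestr β hβ A]; exact hafinA
    exact hAC α ((hAiff α hαE.1 hguess).2 hΦtrue) hαC


end
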